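/- Let u_n = Σ_{ν=0}^{n} ((1/2)_ν^3 / ν!^3) · ((1/2)_{n-ν} / (n-ν)!), where (x)_k is the Pochhammer symbol. For every complex number z with |z| < 1, Σ_{n≥0} u_n ((1/3)_n (2/3)_n / n!^2) z^n = (₃F₂(1/6, 1/2, 5/6; 1, 1; z))^2, where ₃F₂(a₁,a₂,a₃;b₁,b₂;z) = Σ_{n≥0} (a₁)_n (a₂)_n (a₃)_n / (n! (b₁)_n (b₂)_n) z^n. -/
import Mathlib

open Nat

/-- Pochhammer symbol `(x)_n = x(x+1)⋯(x+n-1)` over the complex numbers. -/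
noncomputable def poch (x : ℂ) (n : ℕ) : ℂ := (ascPochhammer ℂ n).eval x

/-- The sequence `u_n` from identity (7), as a complex number. -/
noncomputable def u (n : ℕ) : ℂ :=
  ∑ ν ∈ Finset.range (n + 1),
    (poch (1 / 2) ν) ^ 3 / ((ν ! : ℂ)) ^ 3 * (poch (1 / 2) (n - ν) / ((n - ν)! : ℂ))

lemma poch_zero (x : ℂ) : poch x 0 = 1 := by simp [poch]

lemma poch_succ (x : ℂ) (n : ℕ) : poch x (n + 1) = poch x n * (x + n) := by
  simp [poch, ascPochhammer_succ_right, Polynomial.eval_mul]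

lemma poch_ne_zero {x : ℂ} (hx : 0 < x.re) (n : ℕ) : poch x n ≠ 0 := by
  induction n with
  | zero => simp [poch_zero]
  | succ n ih =>
    rw [poch_succ]
    refine mul_ne_zero ih ?_
    intro h
    have : (x + n).re = 0 := by rw [h]; simp
    simp [Complex.add_re] at this
    have : (0:ℝ) ≤ (n:ℝ) := Nat.cast_nonneg n
    linarith [hx]

lemma fact_ne_zero' (n : ℕ) : ((n ! : ℕ) : ℂ) ≠ 0 := by
  exact_mod_cast Nat.factorial_ne_zero n

/-- opaque numerator/denominator atoms -/
noncomputable def nb (x : ℂ) : ℂ := (x+1/6)*(x+1/2)*(x+5/6)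
noncomputable def db (x : ℂ) : ℂ := (x+1)^3
noncomputable def nA (x : ℂ) : ℂ := (x+1/2)^3
noncomputable def nE (x : ℂ) : ℂ := x+1/2
noncomputable def dE (x : ℂ) : ℂ := x+1
noncomputable def nW (x : ℂ) : ℂ := (x+1/3)*(x+2/3)
noncomputable def dW (x : ℂ) : ℂ := (x+1)^2
noncomputable def Dd (x : ℂ) : ℂ := (x+1)^3*(x-1/6)*(x-1/2)*(x-5/6)
noncomputable def Du (x : ℂ) : ℂ := (x+1)*(x-1/2)

noncomputable def bb (k : ℕ) : ℂ :=
  poch (1/6) k * poch (1/2) k * poch (5/6) k / ((k ! : ℂ) * poch 1 k * poch 1 k)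

noncomputable def aa (k : ℕ) : ℂ := (poch (1/2) k) ^ 3 / ((k ! : ℂ)) ^ 3

noncomputable def ee (k : ℕ) : ℂ := poch (1/2) k / ((k ! : ℂ))

noncomputable def ww (n : ℕ) : ℂ := poch (1/3) n * poch (2/3) n / ((n ! : ℂ)) ^ 2

noncomputable def dd (n : ℕ) : ℂ := ∑ k ∈ Finset.range (n+1), bb k * bb (n-k)

lemma np1 (m : ℕ) : ((m:ℂ) + 1) ≠ 0 := by
  intro h; have := congrArg Complex.re h; simp at this
  linarith [Nat.cast_nonneg (α := ℝ) m]

lemma bb_succ (k : ℕ) : bb (k+1) = bb k * (nb k / db k) := by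
  have h16 : poch (1/6) k ≠ 0 := poch_ne_zero (by norm_num) k
  have h12 : poch (1/2) k ≠ 0 := poch_ne_zero (by norm_num) k
  have h56 : poch (5/6) k ≠ 0 := poch_ne_zero (by norm_num) k
  have h1 : poch 1 k ≠ 0 := poch_ne_zero (by norm_num) k
  have hf : ((k ! : ℕ) : ℂ) ≠ 0 := fact_ne_zero' k
  have hk1 : ((k:ℂ) + 1) ≠ 0 := np1 k
  have hk1' : (1 + (k:ℂ)) ≠ 0 := by rw [add_comm]; exact hk1
  simp only [bb, nb, db, poch_succ, Nat.factorial_succ, Nat.cast_mul, Nat.cast_add, Nat.cast_one]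
  simp only [_root_.div_mul_div_comm]
  rw [div_eq_div_iff (by apply_rules [mul_ne_zero, pow_ne_zero, one_ne_zero])
    (by apply_rules [mul_ne_zero, pow_ne_zero, one_ne_zero])]
  ring

lemma aa_succ (k : ℕ) : aa (k+1) = aa k * (nA k / db k) := by
  have h12 : poch (1/2) k ≠ 0 := poch_ne_zero (by norm_num) k
  have hf : ((k ! : ℕ) : ℂ) ≠ 0 := fact_ne_zero' k
  have hk1 : ((k:ℂ) + 1) ≠ 0 := np1 k
  have hk1' : (1 + (k:ℂ)) ≠ 0 := by rw [add_comm]; exact hk1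
  simp only [aa, nA, db, poch_succ, Nat.factorial_succ, Nat.cast_mul, Nat.cast_add, Nat.cast_one]
  simp only [_root_.div_mul_div_comm]
  rw [div_eq_div_iff (by apply_rules [mul_ne_zero, pow_ne_zero, one_ne_zero])
    (by apply_rules [mul_ne_zero, pow_ne_zero, one_ne_zero])]
  ring

lemma ee_succ (k : ℕ) : ee (k+1) = ee k * (nE k / dE k) := by
  have h12 : poch (1/2) k ≠ 0 := poch_ne_zero (by norm_num) k
  have hf : ((k ! : ℕ) : ℂ) ≠ 0 := fact_ne_zero' k
  have hk1 : ((k:ℂ) + 1) ≠ 0 := np1 k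
  have hk1' : (1 + (k:ℂ)) ≠ 0 := by rw [add_comm]; exact hk1
  simp only [ee, nE, dE, poch_succ, Nat.factorial_succ, Nat.cast_mul, Nat.cast_add, Nat.cast_one]
  simp only [_root_.div_mul_div_comm]
  rw [div_eq_div_iff (by apply_rules [mul_ne_zero, pow_ne_zero, one_ne_zero])
    (by apply_rules [mul_ne_zero, pow_ne_zero, one_ne_zero])]
  ring

lemma ww_succ (n : ℕ) : ww (n+1) = ww n * (nW n / dW n) := by
  have h13 : poch (1/3) n ≠ 0 := poch_ne_zero (by norm_num) n
  have h23 : poch (2/3) n ≠ 0 := poch_ne_zero (by norm_num) n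
  have hf : ((n ! : ℕ) : ℂ) ≠ 0 := fact_ne_zero' n
  have hk1 : ((n:ℂ) + 1) ≠ 0 := np1 n
  have hk1' : (1 + (n:ℂ)) ≠ 0 := by rw [add_comm]; exact hk1
  simp only [ww, nW, dW, poch_succ, Nat.factorial_succ, Nat.cast_mul, Nat.cast_add, Nat.cast_one]
  simp only [_root_.div_mul_div_comm]
  rw [div_eq_div_iff (by apply_rules [mul_ne_zero, pow_ne_zero, one_ne_zero])
    (by apply_rules [mul_ne_zero, pow_ne_zero, one_ne_zero])]
  ring

noncomputable def RdN (k m : ℂ) : ℂ := (-65/4) * k^3 + (39/2) * k^3 * m^1 + (2085/4) * k^3 * m^2 + 82 * k^3 * m^3 + (-4533/2) * k^3 * m^4 + (-1269) * k^3 * m^5 + 2214 * k^3 * m^6 + 1620 * k^3 * m^7 + (-415/8) * k^4 + (1673/8) * k^4 * m^1 + 950 * k^4 * m^2 + (-1579) * k^4 * m^3 + (-3042) * k^4 * m^4 + 1818 * k^4 * m^5 + 2592 * k^4 * m^6 + (-335/8) * k^5 + 279 * k^5 * m^1 + (11/2) * k^5 * m^2 + (-1071) * k^5 * m^3 + 72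 * k^5 * m^4 + 972 * k^5 * m^5

noncomputable def RuN (k m : ℂ) : ℂ := (-8) * k^3 + 114 * k^3 * m^2 + 16 * k^3 * m^3 + (-432) * k^3 * m^4 + (-180) * k^3 * m^5 + 486 * k^3 * m^6 + 324 * k^3 * m^7 + (-16) * k^4 + 196 * k^4 * m^1 + 212 * k^4 * m^2 + (-1368) * k^4 * m^3 + (-1044) * k^4 * m^4 + 2268 * k^4 * m^5 + 1944 * k^4 * m^6 + 82 * k^5 + 376 * k^5 * m^1 + (-1512) * k^5 * m^2 + (-2376) * k^5 * m^3 + 4050 * k^5 * m^4 + 4860 * k^5 * m^5 + 180 * k^6 + (-648) * k^6 * m^1 + (-2664) * k^6 * m^2 + 3240 * k^6 * m^3 + 6480 * k^6 * m^4 + (-72) * k^7 + (-1476) * k^7 * m^1 + 810 * k^7 * m^2 + 4860 * k^7 * m^3 + (-324) * k^8 + (-324) * k^8 * m^1 + 1944 * k^8 * m^2 + (-162) * k^9 + 324 * k^9 * m^1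

noncomputable def Rdf (k m : ℂ) : ℂ := RdN k m / Dd m
noncomputable def Ruf (k m : ℂ) : ℂ := RuN k m / Du m
noncomputable def P0c (x : ℂ) : ℂ := 648*x^5+3240*x^4+6120*x^3+5400*x^2+2192*x+320
noncomputable def P1c (x : ℂ) : ℂ := -(1296*x^5+9720*x^4+29610*x^3+45765*x^2+35829*x+11340)
noncomputable def P2c (x : ℂ) : ℂ := 648*(x+2)^5
noncomputable def q0c (x : ℂ) : ℂ := P0c x * dW x * dW (x+1)
noncomputable def q1c (x : ℂ) : ℂ := P1c x * nW x * dW (x+1)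
noncomputable def q2c (x : ℂ) : ℂ := P2c x * nW x * nW (x+1)
noncomputable def Hdf (k m : ℕ) : ℂ := Rdf k m * (bb k * bb m)
noncomputable def Huf (k m : ℕ) : ℂ := Ruf k m * (aa k * ee m)

lemma ne_shift (m : ℕ) (c : ℚ) (h : ∀ j : ℕ, (c:ℂ) ≠ j) : ((m:ℂ) - (c:ℂ)) ≠ 0 := by
  intro hh
  exact h m (by linear_combination -hh)

lemma ne_sixth (m : ℕ) : ((m:ℂ) - 1/6) ≠ 0 := by
  intro h
  have h6 : ((6*m : ℕ) : ℂ) = ((1:ℕ) : ℂ) := by push_cast; linear_combination 6*h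
  have := Nat.cast_injective (R := ℂ) h6
  omega

lemma ne_half (m : ℕ) : ((m:ℂ) - 1/2) ≠ 0 := by
  intro h
  have h2 : ((2*m : ℕ) : ℂ) = ((1:ℕ) : ℂ) := by push_cast; linear_combination 2*h
  have := Nat.cast_injective (R := ℂ) h2
  omega

lemma ne_fivesixth (m : ℕ) : ((m:ℂ) - 5/6) ≠ 0 := by
  intro h
  have h6 : ((6*m : ℕ) : ℂ) = ((5:ℕ) : ℂ) := by push_cast; linear_combination 6*h
  have := Nat.cast_injective (R := ℂ) h6
  omega

lemma np2 (m : ℕ) : ((m:ℂ) + 2) ≠ 0 := by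
  intro h; have := congrArg Complex.re h; simp at this
  linarith [Nat.cast_nonneg (α := ℝ) m]

lemma db_ne (m : ℕ) : db (m:ℂ) ≠ 0 := pow_ne_zero _ (np1 m)

lemma db_ne' (m : ℕ) : db ((m:ℂ)+1) ≠ 0 := by
  have := db_ne (m+1); push_cast at this; exact this

lemma dE_ne (m : ℕ) : dE (m:ℂ) ≠ 0 := np1 m

lemma dE_ne' (m : ℕ) : dE ((m:ℂ)+1) ≠ 0 := by
  have := dE_ne (m+1); push_cast at this; exact this

lemma dW_ne (m : ℕ) : dW (m:ℂ) ≠ 0 := pow_ne_zero _ (np1 m)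

lemma dW_ne' (m : ℕ) : dW ((m:ℂ)+1) ≠ 0 := by
  have := dW_ne (m+1); push_cast at this; exact this

lemma Dd_ne (m : ℕ) : Dd (m:ℂ) ≠ 0 := by
  refine mul_ne_zero (mul_ne_zero (mul_ne_zero (pow_ne_zero _ (np1 m)) (ne_sixth m))
    (ne_half m)) (ne_fivesixth m)

lemma Dd_ne' (m : ℕ) : Dd ((m:ℂ)+1) ≠ 0 := by
  have := Dd_ne (m+1); push_cast at this; exact this

lemma Du_ne (m : ℕ) : Du (m:ℂ) ≠ 0 := mul_ne_zero (np1 m) (ne_half m)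

lemma Du_ne' (m : ℕ) : Du ((m:ℂ)+1) ≠ 0 := by
  have := Du_ne (m+1); push_cast at this; exact this

set_option maxHeartbeats 4000000 in
lemma core_d (k m : ℕ) :
    P0c ((k:ℂ)+(m:ℂ)) + P1c ((k:ℂ)+(m:ℂ)) * (nb (m:ℂ) / db (m:ℂ))
      + P2c ((k:ℂ)+(m:ℂ)) * (nb (m:ℂ) / db (m:ℂ)) * (nb ((m:ℂ)+1) / db ((m:ℂ)+1))
    = RdN ((k:ℂ)+1) (m:ℂ) / Dd (m:ℂ) * (nb (k:ℂ) / db (k:ℂ))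
      - RdN (k:ℂ) ((m:ℂ)+1) / Dd ((m:ℂ)+1) * (nb (m:ℂ) / db (m:ℂ)) := by
  have h1 := db_ne k; have h2 := db_ne m; have h3 := db_ne' m
  have h4 := Dd_ne m; have h5 := Dd_ne' m
  field_simp
  simp only [RdN, P0c, P1c, P2c, nb, db, Dd]
  ring

set_option maxHeartbeats 4000000 in
lemma core_u (k m : ℕ) :
    q0c ((k:ℂ)+(m:ℂ)) + q1c ((k:ℂ)+(m:ℂ)) * (nE (m:ℂ) / dE (m:ℂ))
      + q2c ((k:ℂ)+(m:ℂ)) * (nE (m:ℂ) / dE (m:ℂ)) * (nE ((m:ℂ)+1) / dE ((m:ℂ)+1))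
    = RuN ((k:ℂ)+1) (m:ℂ) / Du (m:ℂ) * (nA (k:ℂ) / db (k:ℂ))
      - RuN (k:ℂ) ((m:ℂ)+1) / Du ((m:ℂ)+1) * (nE (m:ℂ) / dE (m:ℂ)) := by
  have h1 := db_ne k; have h2 := dE_ne m; have h3 := dE_ne' m
  have h4 := Du_ne m; have h5 := Du_ne' m
  field_simp
  simp only [RuN, q0c, q1c, q2c, P0c, P1c, P2c, nE, dE, nA, db, Du, nW, dW]
  ring

lemma cert_d (k m : ℕ) :
    P0c ((k:ℂ)+(m:ℂ)) * (bb k * bb m) + P1c ((k:ℂ)+(m:ℂ)) * (bb k * bb (m+1))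
      + P2c ((k:ℂ)+(m:ℂ)) * (bb k * bb (m+2))
    = Hdf (k+1) m - Hdf k (m+1) := by
  have e1 : bb (m+1) = bb m * (nb m / db m) := bb_succ m
  have e2 : bb (m+2) = bb (m+1) * (nb ((m:ℂ)+1) / db ((m:ℂ)+1)) := by
    have := bb_succ (m+1); push_cast at this ⊢; exact this
  have e3 : bb (k+1) = bb k * (nb k / db k) := bb_succ k
  simp only [Hdf, Rdf]
  rw [e2, e1, e3]
  push_cast
  linear_combination (bb k * bb m) * core_d k m

lemma cert_u (k m : ℕ) :
    q0c ((k:ℂ)+(m:ℂ)) * (aa k * ee m) + q1c ((k:ℂ)+(m:ℂ)) * (aa k * ee (m+1))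
      + q2c ((k:ℂ)+(m:ℂ)) * (aa k * ee (m+2))
    = Huf (k+1) m - Huf k (m+1) := by
  have e1 : ee (m+1) = ee m * (nE m / dE m) := ee_succ m
  have e2 : ee (m+2) = ee (m+1) * (nE ((m:ℂ)+1) / dE ((m:ℂ)+1)) := by
    have := ee_succ (m+1); push_cast at this ⊢; exact this
  have e3 : aa (k+1) = aa k * (nA k / db k) := aa_succ k
  simp only [Huf, Ruf]
  rw [e2, e1, e3]
  push_cast
  linear_combination (aa k * ee m) * core_u k m

lemma bb_zero : bb 0 = 1 := by
  simp [bb, poch_zero]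

lemma bb_one : bb 1 = 5/72 := by
  have := bb_succ 0
  rw [bb_zero] at this
  rw [this]
  norm_num [nb, db]

lemma ee_zero : ee 0 = 1 := by simp [ee, poch_zero]

lemma ee_one : ee 1 = 1/2 := by
  have := ee_succ 0
  rw [ee_zero] at this
  rw [this]
  norm_num [nE, dE]

lemma Dd0_ne : Dd 0 ≠ 0 := by norm_num [Dd]

lemma Du0_ne : Du 0 ≠ 0 := by norm_num [Du]

set_option maxHeartbeats 1000000 in
lemma scal_bnd_d (n : ℕ) :
    RdN ((n:ℂ)+1) 0 / Dd 0 + P1c (n:ℂ) + P2c (n:ℂ) * (5/72 + nb ((n:ℂ)+1) / db ((n:ℂ)+1)) = 0 := by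
  have h3 := db_ne' n
  have hD := Dd0_ne
  field_simp
  simp only [RdN, P1c, P2c, nb, db, Dd]
  ring

set_option maxHeartbeats 1000000 in
lemma scal_bnd_u (n : ℕ) :
    RuN ((n:ℂ)+1) 0 / Du 0 + q1c (n:ℂ) + q2c (n:ℂ) * (1/2 + nA ((n:ℂ)+1) / db ((n:ℂ)+1)) = 0 := by
  have h3 := db_ne' n
  have hD := Du0_ne
  field_simp
  simp only [RuN, q1c, q2c, P1c, P2c, nA, nW, dW, db, Du]
  ring

lemma bnd_d (n : ℕ) :
    Hdf (n+1) 0 + (P1c (n:ℂ) * (bb (n+1) * bb 0)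
      + P2c (n:ℂ) * (bb (n+1) * bb 1 + bb (n+2) * bb 0)) = 0 := by
  have hb2 : bb (n+2) = bb (n+1) * (nb ((n:ℂ)+1) / db ((n:ℂ)+1)) := by
    have := bb_succ (n+1); push_cast at this ⊢; exact this
  simp only [Hdf, Rdf]
  rw [hb2, bb_zero, bb_one]
  push_cast
  linear_combination bb (n+1) * scal_bnd_d n

lemma bnd_u (n : ℕ) :
    Huf (n+1) 0 + (q1c (n:ℂ) * (aa (n+1) * ee 0)
      + q2c (n:ℂ) * (aa (n+1) * ee 1 + aa (n+2) * ee 0)) = 0 := by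
  have hb2 : aa (n+2) = aa (n+1) * (nA ((n:ℂ)+1) / db ((n:ℂ)+1)) := by
    have := aa_succ (n+1); push_cast at this ⊢; exact this
  simp only [Huf, Ruf]
  rw [hb2, ee_zero, ee_one]
  push_cast
  linear_combination aa (n+1) * scal_bnd_u n

lemma Hdf_zero (m : ℕ) : Hdf 0 m = 0 := by
  simp only [Hdf, Rdf, RdN]
  push_cast
  norm_num

lemma Huf_zero (m : ℕ) : Huf 0 m = 0 := by
  simp only [Huf, Ruf, RuN]
  push_cast
  norm_num

lemma tele_d (n : ℕ) :
    P0c (n:ℂ) * dd n + P1c (n:ℂ) * dd (n+1) + P2c (n:ℂ) * dd (n+2) = 0 := by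
  have hkey : ∀ k ∈ Finset.range (n+1),
      (P0c (n:ℂ) * (bb k * bb (n-k)) + P1c (n:ℂ) * (bb k * bb ((n-k)+1))
        + P2c (n:ℂ) * (bb k * bb ((n-k)+2)))
      = (fun k => Hdf k (n+1-k)) (k+1) - (fun k => Hdf k (n+1-k)) k := by
    intro k hk
    have hk' : k ≤ n := Nat.lt_succ_iff.mp (Finset.mem_range.mp hk)
    have hc : ((k:ℂ) + ((n-k : ℕ):ℂ)) = (n:ℂ) := by
      rw [Nat.cast_sub hk']; ring
    have h1 : n+1-(k+1) = n-k := by omega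
    have h2 : n+1-k = (n-k)+1 := by omega
    simp only [h1, h2]
    have := cert_d k (n-k)
    rw [hc] at this
    exact this
  have hsum : ∑ k ∈ Finset.range (n+1),
      (P0c (n:ℂ) * (bb k * bb (n-k)) + P1c (n:ℂ) * (bb k * bb ((n-k)+1))
        + P2c (n:ℂ) * (bb k * bb ((n-k)+2)))
      = Hdf (n+1) 0 - Hdf 0 (n+1) := by
    rw [Finset.sum_congr rfl hkey, Finset.sum_range_sub (fun k => Hdf k (n+1-k)) (n+1)]
    simp
  have hd1 : dd (n+1) = (∑ k ∈ Finset.range (n+1), bb k * bb ((n-k)+1)) + bb (n+1) * bb 0 := by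
    rw [dd, Finset.sum_range_succ]
    congr 1
    · refine Finset.sum_congr rfl (fun k hk => ?_)
      have hk' : k ≤ n := Nat.lt_succ_iff.mp (Finset.mem_range.mp hk)
      rw [show n+1-k = (n-k)+1 by omega]
    · simp
  have hd2 : dd (n+2) = (∑ k ∈ Finset.range (n+1), bb k * bb ((n-k)+2))
      + bb (n+1) * bb 1 + bb (n+2) * bb 0 := by
    rw [dd, Finset.sum_range_succ, Finset.sum_range_succ]
    congr 2
    · refine Finset.sum_congr rfl (fun k hk => ?_)
      have hk' : k ≤ n := Nat.lt_succ_iff.mp (Finset.mem_range.mp hk)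
      rw [show n+2-k = (n-k)+2 by omega]
    · rw [show n+2-(n+1) = 1 by omega]
    · simp
  calc P0c (n:ℂ) * dd n + P1c (n:ℂ) * dd (n+1) + P2c (n:ℂ) * dd (n+2)
      = (∑ k ∈ Finset.range (n+1),
          (P0c (n:ℂ) * (bb k * bb (n-k)) + P1c (n:ℂ) * (bb k * bb ((n-k)+1))
            + P2c (n:ℂ) * (bb k * bb ((n-k)+2))))
        + (P1c (n:ℂ) * (bb (n+1) * bb 0)
            + P2c (n:ℂ) * (bb (n+1) * bb 1 + bb (n+2) * bb 0)) := by
        rw [hd1, hd2, dd]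
        simp only [mul_add, Finset.mul_sum, Finset.sum_add_distrib]
        ring
    _ = (Hdf (n+1) 0 - Hdf 0 (n+1))
        + (P1c (n:ℂ) * (bb (n+1) * bb 0)
            + P2c (n:ℂ) * (bb (n+1) * bb 1 + bb (n+2) * bb 0)) := by rw [hsum]
    _ = 0 := by rw [Hdf_zero]; linear_combination bnd_d n

lemma u_eq (n : ℕ) : u n = ∑ k ∈ Finset.range (n+1), aa k * ee (n-k) := rfl

lemma tele_u (n : ℕ) :
    q0c (n:ℂ) * u n + q1c (n:ℂ) * u (n+1) + q2c (n:ℂ) * u (n+2) = 0 := by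
  have hkey : ∀ k ∈ Finset.range (n+1),
      (q0c (n:ℂ) * (aa k * ee (n-k)) + q1c (n:ℂ) * (aa k * ee ((n-k)+1))
        + q2c (n:ℂ) * (aa k * ee ((n-k)+2)))
      = (fun k => Huf k (n+1-k)) (k+1) - (fun k => Huf k (n+1-k)) k := by
    intro k hk
    have hk' : k ≤ n := Nat.lt_succ_iff.mp (Finset.mem_range.mp hk)
    have hc : ((k:ℂ) + ((n-k : ℕ):ℂ)) = (n:ℂ) := by
      rw [Nat.cast_sub hk']; ring
    have h1 : n+1-(k+1) = n-k := by omega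
    have h2 : n+1-k = (n-k)+1 := by omega
    simp only [h1, h2]
    have := cert_u k (n-k)
    rw [hc] at this
    exact this
  have hsum : ∑ k ∈ Finset.range (n+1),
      (q0c (n:ℂ) * (aa k * ee (n-k)) + q1c (n:ℂ) * (aa k * ee ((n-k)+1))
        + q2c (n:ℂ) * (aa k * ee ((n-k)+2)))
      = Huf (n+1) 0 - Huf 0 (n+1) := by
    rw [Finset.sum_congr rfl hkey, Finset.sum_range_sub (fun k => Huf k (n+1-k)) (n+1)]
    simp
  have hd1 : u (n+1) = (∑ k ∈ Finset.range (n+1), aa k * ee ((n-k)+1)) + aa (n+1) * ee 0 := by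
    rw [u_eq, Finset.sum_range_succ]
    congr 1
    · refine Finset.sum_congr rfl (fun k hk => ?_)
      have hk' : k ≤ n := Nat.lt_succ_iff.mp (Finset.mem_range.mp hk)
      rw [show n+1-k = (n-k)+1 by omega]
    · simp
  have hd2 : u (n+2) = (∑ k ∈ Finset.range (n+1), aa k * ee ((n-k)+2))
      + aa (n+1) * ee 1 + aa (n+2) * ee 0 := by
    rw [u_eq, Finset.sum_range_succ, Finset.sum_range_succ]
    congr 2
    · refine Finset.sum_congr rfl (fun k hk => ?_)
      have hk' : k ≤ n := Nat.lt_succ_iff.mp (Finset.mem_range.mp hk)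
      rw [show n+2-k = (n-k)+2 by omega]
    · rw [show n+2-(n+1) = 1 by omega]
    · simp
  calc q0c (n:ℂ) * u n + q1c (n:ℂ) * u (n+1) + q2c (n:ℂ) * u (n+2)
      = (∑ k ∈ Finset.range (n+1),
          (q0c (n:ℂ) * (aa k * ee (n-k)) + q1c (n:ℂ) * (aa k * ee ((n-k)+1))
            + q2c (n:ℂ) * (aa k * ee ((n-k)+2))))
        + (q1c (n:ℂ) * (aa (n+1) * ee 0)
            + q2c (n:ℂ) * (aa (n+1) * ee 1 + aa (n+2) * ee 0)) := by
        rw [hd1, hd2, u_eq]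
        simp only [mul_add, Finset.mul_sum, Finset.sum_add_distrib]
        ring
    _ = (Huf (n+1) 0 - Huf 0 (n+1))
        + (q1c (n:ℂ) * (aa (n+1) * ee 0)
            + q2c (n:ℂ) * (aa (n+1) * ee 1 + aa (n+2) * ee 0)) := by rw [hsum]
    _ = 0 := by rw [Huf_zero]; linear_combination bnd_u n

lemma P2c_ne (n : ℕ) : P2c (n:ℂ) ≠ 0 := by
  refine mul_ne_zero (by norm_num) (pow_ne_zero _ (np2 n))

lemma third_ne (n : ℕ) (c : ℝ) (hc : 0 < c) : ((n:ℂ) + (c:ℂ)) ≠ 0 := by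
  intro h; have := congrArg Complex.re h
  simp [Complex.add_re] at this
  linarith [Nat.cast_nonneg (α := ℝ) n]

lemma nW_ne (n : ℕ) : nW (n:ℂ) ≠ 0 := by
  refine mul_ne_zero ?_ ?_
  · have := third_ne n (1/3) (by norm_num); simpa using this
  · have := third_ne n (2/3) (by norm_num); simpa using this

lemma nW_ne' (n : ℕ) : nW ((n:ℂ)+1) ≠ 0 := by
  have := nW_ne (n+1); push_cast at this; exact this

lemma q2c_ne (n : ℕ) : q2c (n:ℂ) ≠ 0 :=
  mul_ne_zero (mul_ne_zero (P2c_ne n) (nW_ne n)) (nW_ne' n)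

lemma aa_zero : aa 0 = 1 := by simp [aa, poch_zero]

lemma ww_zero : ww 0 = 1 := by simp [ww, poch_zero]

lemma dd_zero : dd 0 = 1 := by simp [dd, bb_zero]

lemma u_zero : u 0 = 1 := by
  rw [u_eq]; simp [aa_zero, ee_zero]

lemma dd_one : dd 1 = 5/36 := by
  rw [dd]
  rw [Finset.sum_range_succ, Finset.sum_range_succ]
  simp [bb_zero, bb_one]
  norm_num

lemma u_one : u 1 = 5/8 := by
  have ha1 : aa 1 = 1/8 := by
    have := aa_succ 0
    rw [aa_zero] at this
    rw [this]; norm_num [nA, db]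
  rw [u_eq]
  rw [Finset.sum_range_succ, Finset.sum_range_succ]
  simp [aa_zero, ee_zero, ee_one, ha1]
  norm_num

lemma ww_one : ww 1 = 2/9 := by
  have := ww_succ 0
  rw [ww_zero] at this
  rw [this]; norm_num [nW, dW]

lemma main_eq : ∀ n, dd n = ww n * u n := by
  have H : ∀ n, dd n = ww n * u n ∧ dd (n+1) = ww (n+1) * u (n+1) := by
    intro n
    induction n with
    | zero =>
      constructor
      · rw [dd_zero, ww_zero, u_zero]; norm_num
      · rw [dd_one, ww_one, u_one]; norm_num
    | succ n ih =>
      refine ⟨ih.2, ?_⟩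
      have hP2 := P2c_ne n
      have hq2 := q2c_ne n
      have hd2 : dd (n+2) = (-(P0c (n:ℂ) * dd n) - P1c (n:ℂ) * dd (n+1)) / P2c (n:ℂ) := by
        rw [eq_div_iff hP2]; linear_combination tele_d n
      have hu2 : u (n+2) = (-(q0c (n:ℂ) * u n) - q1c (n:ℂ) * u (n+1)) / q2c (n:ℂ) := by
        rw [eq_div_iff hq2]; linear_combination tele_u n
      have w1 : ww (n+1) = ww n * (nW (n:ℂ) / dW (n:ℂ)) := ww_succ n
      have w2 : ww (n+2) = ww (n+1) * (nW ((n:ℂ)+1) / dW ((n:ℂ)+1)) := by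
        have := ww_succ (n+1); push_cast at this ⊢; exact this
      rw [show n+1+1 = n+2 from rfl, hd2, hu2, ih.1, ih.2, w2, w1]
      have hdW := dW_ne n
      have hdW' := dW_ne' n
      rw [div_eq_iff hP2]
      field_simp
      simp only [q0c, q1c, q2c]
      ring
  exact fun n => (H n).1

lemma sig_norm_le (n : ℕ) : ‖nb (n:ℂ) / db (n:ℂ)‖ ≤ 1 := by
  have hrepr : nb (n:ℂ) / db (n:ℂ)
      = ((((((n:ℝ)+1/6)*((n:ℝ)+1/2)*((n:ℝ)+5/6))/((n:ℝ)+1)^3 : ℝ)) : ℂ) := by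
    simp only [nb, db]
    push_cast
    ring
  rw [hrepr, Complex.norm_real, Real.norm_eq_abs]
  have h0 : (0:ℝ) ≤ (n:ℝ) := Nat.cast_nonneg n
  rw [abs_of_nonneg (by positivity)]
  rw [div_le_one (by positivity)]
  nlinarith [h0, sq_nonneg ((n:ℝ))]

lemma bb_norm_le (n : ℕ) : ‖bb n‖ ≤ 1 := by
  induction n with
  | zero => rw [bb_zero]; simp
  | succ n ih =>
    rw [bb_succ, norm_mul]
    calc ‖bb n‖ * ‖nb (n:ℂ) / db (n:ℂ)‖ ≤ 1 * 1 :=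
      mul_le_mul ih (sig_norm_le n) (norm_nonneg _) (by norm_num)
    _ = 1 := by norm_num

/-- First equality of identity (10). -/
theorem curious_identity_3F2_square
    (z : ℂ) (hz : ‖z‖ < 1) :
    (∑' (n : ℕ), u n * ((poch (1 / 3) n * poch (2 / 3) n) / ((n ! : ℂ)) ^ 2) * z ^ n)
    = (∑' (n : ℕ),
        (poch (1 / 6) n * poch (1 / 2) n * poch (5 / 6) n) /
          ((n ! : ℂ) * poch 1 n * poch 1 n) * z ^ n) ^ 2 := by
  have hsum : Summable (fun n : ℕ => ‖bb n * z^n‖) := by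
    refine Summable.of_nonneg_of_le (fun n => norm_nonneg _) (fun n => ?_)
      (summable_geometric_of_lt_one (norm_nonneg z) hz)
    rw [norm_mul, norm_pow]
    have := mul_le_mul_of_nonneg_right (bb_norm_le n) (by positivity : (0:ℝ) ≤ ‖z‖^n)
    simpa using this
  have hR : (∑' (n : ℕ),
      (poch (1 / 6) n * poch (1 / 2) n * poch (5 / 6) n) /
        ((n ! : ℂ) * poch 1 n * poch 1 n) * z ^ n) = ∑' n, bb n * z^n := rfl
  rw [hR, sq, tsum_mul_tsum_eq_tsum_sum_range_of_summable_norm hsum hsum]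
  refine tsum_congr (fun n => ?_)
  have h1 : ∑ k ∈ Finset.range (n+1), (bb k * z^k) * (bb (n-k) * z^(n-k)) = dd n * z^n := by
    rw [dd, Finset.sum_mul]
    refine Finset.sum_congr rfl (fun k hk => ?_)
    have hk' : k ≤ n := Nat.lt_succ_iff.mp (Finset.mem_range.mp hk)
    rw [mul_mul_mul_comm, ← pow_add, Nat.add_sub_cancel' hk']
  rw [h1, main_eq n]
  have h2 : u n * ((poch (1 / 3) n * poch (2 / 3) n) / ((n ! : ℂ))^2) = ww n * u n := by
    rw [ww]; ring
  linear_combination z^n * h2
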